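/- Let L ⊆ Σ^ω be a prefix-independent language and let A_min be a nice, safe minimal and safe centralised history-deterministic coBüchi automaton recognising L; let n_max be the maximal number of states of a safe component of A_min. Then every history-deterministic generalised coBüchi automaton recognising L has at least n_max states. -/

import Mathlib

/-- A transition of an automaton: source state, input letter, output colour,
destination state.  (Acceptance is transition-based.) -/
structure AutTrans (Q A Γ : Type) where
  src : Q
  lab : A
  out : Γ
  dst : Q

/-- An (ω-)automaton with finite state set `Q`, input alphabet `A`,
output alphabet `Γ`, initial state `init`, transition set `delta` and
acceptance condition `acc ⊆ Γ^ω`. -/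
structure Automaton (A Γ : Type) where
  Q : Type
  fin : Fintype Q
  init : Q
  delta : Set (AutTrans Q A Γ)
  acc : Set (ℕ → Γ)

/-- The generalised Büchi condition over the colour set `C`
(output alphabet `𝒫(C)`): every colour appears infinitely often. -/
def genBuchi (C : Type) : Set (ℕ → Set C) :=
  {f | ∀ c : C, ∀ n : ℕ, ∃ m : ℕ, n ≤ m ∧ c ∈ f m}

/-- The generalised coBüchi condition over the colour set `C`:
some colour appears only finitely often. -/
def genCoBuchi (C : Type) : Set (ℕ → Set C) :=
  {f | ∃ c : C, ∃ n : ℕ, ∀ m : ℕ, n ≤ m → c ∉ f m}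

namespace Automaton

variable {A Γ : Type}

/-- Number of states. -/
def size (M : Automaton A Γ) : ℕ := @Fintype.card M.Q M.fin

/-- `ρ` is a run of `M` on the word `w`, starting in the state `q`. -/
def IsRunFrom (M : Automaton A Γ) (q : M.Q) (w : ℕ → A)
    (ρ : ℕ → AutTrans M.Q A Γ) : Prop :=
  (ρ 0).src = q ∧ ∀ n : ℕ, ρ n ∈ M.delta ∧ (ρ n).lab = w n ∧ (ρ n).dst = (ρ (n + 1)).src

/-- The language of `M` with initial state `q`. -/
def LangFrom (M : Automaton A Γ) (q : M.Q) : Set (ℕ → A) :=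
  {w | ∃ ρ : ℕ → AutTrans M.Q A Γ, M.IsRunFrom q w ρ ∧ (fun n => (ρ n).out) ∈ M.acc}

/-- The language of `M`. -/
def Lang (M : Automaton A Γ) : Set (ℕ → A) := M.LangFrom M.init

/-- For every state and letter there is at most one outgoing transition. -/
def Deterministic (M : Automaton A Γ) : Prop :=
  ∀ t ∈ M.delta, ∀ t' ∈ M.delta, t.src = t'.src → t.lab = t'.lab → t = t'

/-- For every state and letter there is at least one outgoing transition. -/
def Complete (M : Automaton A Γ) : Prop :=
  ∀ (p : M.Q) (a : A), ∃ t ∈ M.delta, t.src = p ∧ t.lab = a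

/-- The infinite sequence of transitions chosen by a resolver `r` on the word `w`
(`r` is applied to all nonempty finite prefixes of `w`). -/
def resRun (M : Automaton A Γ) (r : List A → AutTrans M.Q A Γ) (w : ℕ → A) :
    ℕ → AutTrans M.Q A Γ :=
  fun n => r (List.ofFn fun i : Fin (n + 1) => w i)

/-- `r` is a resolver for `M`: on every word it induces a run,
which is accepting whenever the word is in the language of `M`. -/
def IsResolver (M : Automaton A Γ) (r : List A → AutTrans M.Q A Γ) : Prop :=
  ∀ w : ℕ → A, M.IsRunFrom M.init w (M.resRun r w) ∧
    (w ∈ M.Lang → (fun n => (M.resRun r w n).out) ∈ M.acc)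

/-- History-determinism: existence of a resolver. -/
def HistoryDeterministic (M : Automaton A Γ) : Prop := ∃ r, M.IsResolver r

/-- `M` admits a resolver such that every state occurs on some accepting run
induced by the resolver. -/
def ResolverTrim (M : Automaton A Γ) : Prop :=
  ∃ r, M.IsResolver r ∧ ∀ q : M.Q, ∃ w ∈ M.Lang, ∃ n : ℕ, (M.resRun r w n).src = q

/-- Reachability along transitions of `M`. -/
def Reach (M : Automaton A Γ) (p q : M.Q) : Prop :=
  Relation.ReflTransGen (fun x y => ∃ t ∈ M.delta, t.src = x ∧ t.dst = y) p q

/-- Nondeterministic choices lead to language-equivalent states. -/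
def SemanticallyDeterministic (M : Automaton A Γ) : Prop :=
  ∀ t ∈ M.delta, ∀ t' ∈ M.delta, t.src = t'.src → t.lab = t'.lab →
    M.LangFrom t.dst = M.LangFrom t'.dst

/- CoBüchi notions: a coBüchi automaton has output alphabet `Set Unit`
(`𝒫(C)` with `|C| = 1`); a transition is a coBüchi transition iff its output
is `{()}` (i.e. `() ∈ out`), and safe iff its output is `∅`. -/

/-- A safe (non-coBüchi) transition from `p` to `q`. -/
def SafeStep (M : Automaton A (Set Unit)) (p q : M.Q) : Prop :=
  ∃ t ∈ M.delta, t.src = p ∧ t.dst = q ∧ () ∉ t.out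

/-- `p` and `q` lie in the same safe component (same SCC of the safe graph). -/
def SafeConn (M : Automaton A (Set Unit)) (p q : M.Q) : Prop :=
  Relation.ReflTransGen M.SafeStep p q ∧ Relation.ReflTransGen M.SafeStep q p

/-- The safe component (as a set of states) of `q`. -/
def safeComponentOf (M : Automaton A (Set Unit)) (q : M.Q) : Set M.Q :=
  {p | M.SafeConn p q}

/-- `(S, D)` is a safe component of `M`, given with its set of safe transitions. -/
def IsSafeComponent (M : Automaton A (Set Unit)) (S : Set M.Q)
    (D : Set (AutTrans M.Q A (Set Unit))) : Prop :=
  (∃ q : M.Q, S = M.safeComponentOf q) ∧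
    D = {t | t ∈ M.delta ∧ t.src ∈ S ∧ t.dst ∈ S ∧ () ∉ t.out}

/-- The safe language of the state `q`: words labelling an infinite safe path from `q`. -/
def SafeLang (M : Automaton A (Set Unit)) (q : M.Q) : Set (ℕ → A) :=
  {w | ∃ ρ : ℕ → AutTrans M.Q A (Set Unit),
    M.IsRunFrom q w ρ ∧ ∀ n : ℕ, () ∉ (ρ n).out}

/-- The automaton restricted to safe transitions is deterministic. -/
def SafeDeterministic (M : Automaton A (Set Unit)) : Prop :=
  ∀ t ∈ M.delta, ∀ t' ∈ M.delta, () ∉ t.out → () ∉ t'.out →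
    t.src = t'.src → t.lab = t'.lab → t = t'

/-- Every transition joining two distinct safe components is a coBüchi transition. -/
def NormalForm (M : Automaton A (Set Unit)) : Prop :=
  ∀ t ∈ M.delta, () ∉ t.out → M.SafeConn t.src t.dst

/-- A coBüchi automaton is nice if all states are reachable and it is
semantically deterministic, in normal form, and safe deterministic. -/
def Nice (M : Automaton A (Set Unit)) : Prop :=
  (∀ q : M.Q, M.Reach M.init q) ∧ M.SemanticallyDeterministic ∧
    M.NormalForm ∧ M.SafeDeterministic

/-- Equivalent states with equal safe languages are equal. -/
def SafeMinimal (M : Automaton A (Set Unit)) : Prop :=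
  ∀ p q : M.Q, M.LangFrom p = M.LangFrom q → M.SafeLang p = M.SafeLang q → p = q

/-- Equivalent states with safe languages comparable for inclusion lie in the
same safe component. -/
def SafeCentralised (M : Automaton A (Set Unit)) : Prop :=
  ∀ p q : M.Q, M.LangFrom p = M.LangFrom q →
    (M.SafeLang p ⊆ M.SafeLang q ∨ M.SafeLang q ⊆ M.SafeLang p) → M.SafeConn p q

end Automaton

/-- The word `u · w`. -/
def wordAppend {A : Type} (u : List A) (w : ℕ → A) : ℕ → A :=
  fun n => if h : n < u.length then u.get ⟨n, h⟩ else w (n - u.length)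

/-- The residual `u⁻¹L`. -/
def residualLang {A : Type} (u : List A) (L : Set (ℕ → A)) : Set (ℕ → A) :=
  {w | wordAppend u w ∈ L}

/-- `L` is prefix-independent: `u⁻¹L = L` for every finite word `u`. -/
def PrefixIndependent {A : Type} (L : Set (ℕ → A)) : Prop :=
  ∀ u : List A, residualLang u L = L

/-- The local alphabet `Σ_R` at the residual `R`: nonempty finite words `v`
with `v⁻¹R = R` such that no proper nonempty prefix `v'` of `v`
satisfies `v'⁻¹R = R`.  (For `R = u⁻¹L` this says `(uv)⁻¹L = u⁻¹L` and
`(uv')⁻¹L ≠ u⁻¹L` for proper nonempty prefixes.) -/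
def localAlphabet {A : Type} (R : Set (ℕ → A)) : Set (List A) :=
  {v | v ≠ [] ∧ residualLang v R = R ∧
    ∀ v' : List A, v' <+: v → v' ≠ [] → v' ≠ v → residualLang v' R ≠ R}

/-- `PathCol M q w X p`: there is a finite path of `M` from `q` to `p`
labelled by `w` whose transitions produce exactly the set of colours `X`
(the union of the outputs along the path). -/
inductive PathCol {A C : Type} (M : Automaton A (Set C)) :
    M.Q → List A → Set C → M.Q → Prop
  | nil (q : M.Q) : PathCol M q [] ∅ q
  | cons {q r : M.Q} {a : A} {w : List A} {X : Set C}
      (t : AutTrans M.Q A (Set C)) (ht : t ∈ M.delta) (hsrc : t.src = q)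
      (hlab : t.lab = a) (htail : PathCol M t.dst w X r) :
      PathCol M q (a :: w) (t.out ∪ X) r

/-- The localisation `A|_R` of a generalised coBüchi automaton `M` to the
residual `R`, with initial state `q0`: states are the states of `M`
recognising `R`, the alphabet is `Σ_R`, and there is a transition
`q →^{w:X} p` for every finite path of `M` from `q` to `p` labelled by
`w ∈ Σ_R` producing the set of colours `X`. -/
noncomputable def localAut {A C : Type} (M : Automaton A (Set C)) (R : Set (ℕ → A))
    (q0 : {q : M.Q // M.LangFrom q = R}) :
    Automaton (↥(localAlphabet R)) (Set C) where
  Q := {q : M.Q // M.LangFrom q = R}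
  fin := by
    letI := M.fin
    classical
    infer_instance
  init := q0
  delta := {t | PathCol M t.src.1 t.lab.1 t.out t.dst.1}
  acc := genCoBuchi C

/-- The automaton `M` with initial state `q`. -/
def withInit {A Γ : Type} (M : Automaton A Γ) (q : M.Q) : Automaton A Γ :=
  { M with init := q }

/-- Recolour the automaton `M` via `f`, keeping states, initial state and the
underlying transitions, and replacing the acceptance condition by `acc'`. -/
def recolor {A Γ Γ' : Type} (M : Automaton A Γ) (f : AutTrans M.Q A Γ → Γ')
    (acc' : Set (ℕ → Γ')) : Automaton A Γ' where
  Q := M.Q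
  fin := M.fin
  init := M.init
  delta := {t' | ∃ t ∈ M.delta, t'.src = t.src ∧ t'.lab = t.lab ∧ t'.out = f t ∧ t'.dst = t.dst}
  acc := acc'

/-- Concatenation of the first `k` blocks of a sequence of finite words. -/
def flattenPrefix {A : Type} (u : ℕ → List A) (k : ℕ) : List A :=
  (List.ofFn fun i : Fin k => u i).flatten

/-- `x ∈ A^ω` is the concatenation of the infinite sequence of finite words `u`. -/
def IsFlatten {A : Type} (u : ℕ → List A) (x : ℕ → A) : Prop :=
  ∀ (k n : ℕ) (h : n < (flattenPrefix u k).length),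
    (flattenPrefix u k).get ⟨n, h⟩ = x n

/-- Cascade composition `B ∘ M`: the outputs of `M` are fed as inputs to `B`. -/
def composeAut {A Γ Γ' : Type} (B : Automaton Γ Γ') (M : Automaton A Γ) :
    Automaton A Γ' where
  Q := M.Q × B.Q
  fin := by letI := M.fin; letI := B.fin; infer_instance
  init := (M.init, B.init)
  delta := {t | ∃ tM ∈ M.delta, ∃ tB ∈ B.delta,
    t.src = (tM.src, tB.src) ∧ t.lab = tM.lab ∧ tB.lab = tM.out ∧
    t.out = tB.out ∧ t.dst = (tM.dst, tB.dst)}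
  acc := B.acc

/-- The language `L_G = ⋂_v L_v` associated with a graph `G`: words over the
vertices such that for every vertex `v`, either the factor `vv` occurs
infinitely often, or letters outside the closed neighbourhood `N[v]` occur
infinitely often. -/
def LG {V : Type} (G : SimpleGraph V) : Set (ℕ → V) :=
  {w | ∀ v : V, (∀ n : ℕ, ∃ m : ℕ, n ≤ m ∧ w m = v ∧ w (m + 1) = v) ∨
      (∀ n : ℕ, ∃ m : ℕ, n ≤ m ∧ w m ≠ v ∧ ¬ G.Adj v (w m))}

namespace Stmt6

open Automaton

variable {A : Type}

/-! ### Words -/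

/-- Prefix of length `m` of an infinite word. -/
def pfx (w : ℕ → A) (m : ℕ) : List A := List.ofFn fun i : Fin m => w i

/-- Shift of an infinite word. -/
def sh (w : ℕ → A) (T : ℕ) : ℕ → A := fun n => w (T + n)

/-- Prepend a letter to an infinite word. -/
def consW (a : A) (w : ℕ → A) : ℕ → A := fun n => Nat.casesOn n a fun k => w k

@[simp] lemma pfx_length (w : ℕ → A) (m : ℕ) : (pfx w m).length = m := by
  simp [pfx]

lemma pfx_getElem (w : ℕ → A) {m i : ℕ} (h : i < (pfx w m).length) :
    (pfx w m)[i] = w i := by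
  simp [pfx]

lemma pfx_succ (w : ℕ → A) (m : ℕ) : pfx w (m + 1) = pfx w m ++ [w m] := by
  simpa [pfx] using List.ofFn_succ' (n := m) (f := fun i : Fin (m+1) => w i)

lemma wordAppend_singleton (a : A) (w : ℕ → A) :
    wordAppend [a] w = consW a w := by
  funext n
  cases n with
  | zero => simp [wordAppend, consW]
  | succ k => simp [wordAppend, consW]

/-! ### Finite safe runs in a coBüchi automaton -/

/-- `SRun M p u q` : there is a (unique, if `M` is safe deterministic) finite
safe path from `p` to `q` reading the word `u`. -/
def SRun (M : Automaton A (Set Unit)) : M.Q → List A → M.Q → Prop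
  | p, [], q => p = q
  | p, a :: u, q => ∃ t : AutTrans M.Q A (Set Unit),
      t ∈ M.delta ∧ () ∉ t.out ∧ t.src = p ∧ t.lab = a ∧ SRun M t.dst u q

/-- `u` labels some safe path from `p`. -/
def PreS (M : Automaton A (Set Unit)) (p : M.Q) (u : List A) : Prop :=
  ∃ q, SRun M p u q

@[simp] lemma srun_nil (M : Automaton A (Set Unit)) (p q : M.Q) :
    SRun M p [] q ↔ p = q := Iff.rfl

lemma preS_nil (M : Automaton A (Set Unit)) (p : M.Q) : PreS M p [] := ⟨p, rfl⟩

lemma srun_append {M : Automaton A (Set Unit)} {p q r : M.Q} {u v : List A}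
    (h1 : SRun M p u q) (h2 : SRun M q v r) : SRun M p (u ++ v) r := by
  induction u generalizing p with
  | nil => rw [srun_nil] at h1; subst h1; exact h2
  | cons a u ih =>
    obtain ⟨t, ht, hs, hsrc, hlab, htl⟩ := h1
    exact ⟨t, ht, hs, hsrc, hlab, ih htl⟩

lemma srun_append_split {M : Automaton A (Set Unit)} {p r : M.Q} {u v : List A}
    (h : SRun M p (u ++ v) r) : ∃ q, SRun M p u q ∧ SRun M q v r := by
  induction u generalizing p with
  | nil => exact ⟨p, rfl, h⟩
  | cons a u ih =>
    obtain ⟨t, ht, hs, hsrc, hlab, htl⟩ := h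
    obtain ⟨q, hq1, hq2⟩ := ih htl
    exact ⟨q, ⟨t, ht, hs, hsrc, hlab, hq1⟩, hq2⟩

lemma srun_unique {M : Automaton A (Set Unit)} (hdet : M.SafeDeterministic)
    {p q q' : M.Q} {u : List A} (h1 : SRun M p u q) (h2 : SRun M p u q') : q = q' := by
  induction u generalizing p with
  | nil => rw [srun_nil] at h1 h2; exact h1 ▸ h2 ▸ rfl
  | cons a u ih =>
    obtain ⟨t, ht, hs, hsrc, hlab, htl⟩ := h1
    obtain ⟨t', ht', hs', hsrc', hlab', htl'⟩ := h2
    have : t = t' := hdet t ht t' ht' hs hs' (hsrc.trans hsrc'.symm) (hlab.trans hlab'.symm)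
    subst this
    exact ih htl htl'

lemma preS_of_append {M : Automaton A (Set Unit)} {p : M.Q} {u v : List A}
    (h : PreS M p (u ++ v)) : PreS M p u := by
  obtain ⟨r, hr⟩ := h
  obtain ⟨q, hq, -⟩ := srun_append_split hr
  exact ⟨q, hq⟩

lemma preS_take {M : Automaton A (Set Unit)} {p : M.Q} {u : List A}
    (h : PreS M p u) (m : ℕ) : PreS M p (u.take m) := by
  rw [← List.take_append_drop m u] at h
  exact preS_of_append h

/-! ### Windows of infinite safe runs, and the prefix characterisation -/

lemma srun_window {M : Automaton A (Set Unit)} {s : M.Q} {w : ℕ → A}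
    {ρ : ℕ → AutTrans M.Q A (Set Unit)} (hrun : M.IsRunFrom s w ρ)
    (hsafe : ∀ n, () ∉ (ρ n).out) :
    ∀ (u : List A) (j : ℕ), (∀ i (h : i < u.length), w (j + i) = u[i]) →
      SRun M ((ρ j).src) u ((ρ (j + u.length)).src) := by
  intro u
  induction u with
  | nil => intro j _; simp
  | cons a u ih =>
    intro j hlet
    refine ⟨ρ j, (hrun.2 j).1, hsafe j, rfl, ?_, ?_⟩
    · have h0 := hlet 0 (by simp)
      simp only [Nat.add_zero] at h0
      rw [(hrun.2 j).2.1, h0]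
      simp
    · rw [(hrun.2 j).2.2]
      have h2 := ih (j + 1) (fun i h => by
        have hx := hlet (i + 1) (by simpa using Nat.succ_lt_succ h)
        have : j + 1 + i = j + (i + 1) := by omega
        rw [this, hx]; simp)
      have : j + 1 + u.length = j + (a :: u).length := by simp; omega
      rwa [this] at h2

lemma mem_safeLang_iff {M : Automaton A (Set Unit)} (hdet : M.SafeDeterministic)
    {p : M.Q} {w : ℕ → A} :
    w ∈ M.SafeLang p ↔ ∀ m, PreS M p (pfx w m) := by
  constructor
  · rintro ⟨ρ, hrun, hsafe⟩ m
    have h := srun_window hrun hsafe (pfx w m) 0 (fun i h => by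
      rw [pfx_getElem]; simp)
    rw [hrun.1] at h
    exact ⟨_, h⟩
  · intro h
    have hpos : ∀ m, ∃ q, SRun M p (pfx w m) q := h
    choose pos hpos using hpos
    have hstep : ∀ m, SRun M (pos m) [w m] (pos (m + 1)) := by
      intro m
      have h1 := hpos (m + 1)
      rw [pfx_succ] at h1
      obtain ⟨q, hq1, hq2⟩ := srun_append_split h1
      have : q = pos m := srun_unique hdet hq1 (hpos m)
      rwa [this] at hq2
    have htrans : ∀ m, ∃ t : AutTrans M.Q A (Set Unit),
        t ∈ M.delta ∧ () ∉ t.out ∧ t.src = pos m ∧ t.lab = w m ∧ t.dst = pos (m + 1) := by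
      intro m
      obtain ⟨t, ht, hs, hsrc, hlab, htl⟩ := hstep m
      exact ⟨t, ht, hs, hsrc, hlab, htl⟩
    choose ρ hρ1 hρ2 hρ3 hρ4 hρ5 using htrans
    have hp0 : p = pos 0 := hpos 0
    refine ⟨ρ, ⟨by rw [hρ3 0, hp0], fun n => ⟨hρ1 n, hρ4 n, ?_⟩⟩, hρ2⟩
    rw [hρ5 n, hρ3 (n + 1)]

lemma preS_mono_safeLang {M : Automaton A (Set Unit)} (hdet : M.SafeDeterministic)
    {p q : M.Q} (h : ∀ u, PreS M p u → PreS M q u) :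
    M.SafeLang p ⊆ M.SafeLang q := by
  intro w hw
  rw [mem_safeLang_iff hdet] at hw ⊢
  exact fun m => h _ (hw m)

/-! ### Safe components -/

lemma safeConn_refl (M : Automaton A (Set Unit)) (p : M.Q) : M.SafeConn p p :=
  ⟨Relation.ReflTransGen.refl, Relation.ReflTransGen.refl⟩

lemma safeConn_symm {M : Automaton A (Set Unit)} {p q : M.Q}
    (h : M.SafeConn p q) : M.SafeConn q p := ⟨h.2, h.1⟩

lemma safeConn_trans {M : Automaton A (Set Unit)} {p q r : M.Q}
    (h1 : M.SafeConn p q) (h2 : M.SafeConn q r) : M.SafeConn p r :=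
  ⟨h1.1.trans h2.1, h2.2.trans h1.2⟩

/-- A safe-reachability path gives a word with a finite safe run. -/
lemma word_of_reflTransGen {M : Automaton A (Set Unit)} {p q : M.Q}
    (h : Relation.ReflTransGen M.SafeStep p q) : ∃ u, SRun M p u q := by
  induction h with
  | refl => exact ⟨[], rfl⟩
  | tail _ hstep ih =>
    obtain ⟨u, hu⟩ := ih
    obtain ⟨t, ht, hsrc, hdst, hout⟩ := hstep
    exact ⟨u ++ [t.lab], srun_append hu ⟨t, ht, hout, hsrc, rfl, hdst⟩⟩

lemma word_of_safeConn {M : Automaton A (Set Unit)} {p q : M.Q}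
    (h : M.SafeConn p q) : ∃ u, SRun M p u q := word_of_reflTransGen h.1

/-- Single safe transitions connect safely-connected states (normal form),
hence finite safe runs stay in the safe component. -/
lemma safeConn_of_srun {M : Automaton A (Set Unit)} (hnf : M.NormalForm)
    {p q : M.Q} {u : List A} (h : SRun M p u q) : M.SafeConn p q := by
  induction u generalizing p with
  | nil => rw [srun_nil] at h; exact h ▸ safeConn_refl M q
  | cons a u ih =>
    obtain ⟨t, ht, hs, hsrc, hlab, htl⟩ := h
    exact safeConn_trans (hsrc ▸ hnf t ht hs) (ih htl)

/-! ### coBüchi run surgery and residuals -/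

lemma genCoBuchi_unit_iff {f : ℕ → Set Unit} :
    f ∈ genCoBuchi Unit ↔ ∃ n, ∀ m, n ≤ m → () ∉ f m := by
  constructor
  · rintro ⟨c, n, h⟩
    exact ⟨n, fun m hm => by cases c; exact h m hm⟩
  · rintro ⟨n, h⟩
    exact ⟨(), n, h⟩

lemma mem_lang_cons {M : Automaton A (Set Unit)} (hacc : M.acc = genCoBuchi Unit)
    {t : AutTrans M.Q A (Set Unit)} (ht : t ∈ M.delta) {w : ℕ → A}
    (hw : w ∈ M.LangFrom t.dst) : consW t.lab w ∈ M.LangFrom t.src := by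
  obtain ⟨ρ, hrun, haccρ⟩ := hw
  refine ⟨fun n => Nat.casesOn n t (fun k => ρ k), ⟨rfl, ?_⟩, ?_⟩
  · intro n
    cases n with
    | zero => exact ⟨ht, rfl, hrun.1.symm⟩
    | succ k => exact ⟨(hrun.2 k).1, (hrun.2 k).2.1, (hrun.2 k).2.2⟩
  · rw [hacc] at haccρ ⊢
    rw [genCoBuchi_unit_iff] at haccρ ⊢
    obtain ⟨n, hn⟩ := haccρ
    refine ⟨n + 1, fun m hm => ?_⟩
    cases m with
    | zero => omega
    | succ k => exact hn k (by omega)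

lemma tail_mem {M : Automaton A (Set Unit)} (hacc : M.acc = genCoBuchi Unit)
    {q : M.Q} {w : ℕ → A} (hw : w ∈ M.LangFrom q) :
    ∃ t, t ∈ M.delta ∧ t.src = q ∧ t.lab = w 0 ∧ sh w 1 ∈ M.LangFrom t.dst := by
  obtain ⟨ρ, hrun, hac⟩ := hw
  refine ⟨ρ 0, (hrun.2 0).1, hrun.1, (hrun.2 0).2.1, ?_⟩
  refine ⟨fun n => ρ (n + 1), ⟨((hrun.2 0).2.2).symm, fun n =>
    ⟨(hrun.2 (n + 1)).1, ?_, (hrun.2 (n + 1)).2.2⟩⟩, ?_⟩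
  · rw [(hrun.2 (n + 1)).2.1]
    simp [sh, Nat.add_comm]
  · rw [hacc] at hac ⊢
    rw [genCoBuchi_unit_iff] at hac ⊢
    obtain ⟨n, hn⟩ := hac
    exact ⟨n, fun m hm => hn (m + 1) (by omega)⟩

lemma safeLang_subset_langFrom {M : Automaton A (Set Unit)}
    (hacc : M.acc = genCoBuchi Unit) (q : M.Q) : M.SafeLang q ⊆ M.LangFrom q := by
  rintro w ⟨ρ, hrun, hsafe⟩
  refine ⟨ρ, hrun, ?_⟩
  rw [hacc, genCoBuchi_unit_iff]
  exact ⟨0, fun m _ => hsafe m⟩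

lemma suffix_safe_of_mem {M : Automaton A (Set Unit)} (hacc : M.acc = genCoBuchi Unit)
    {q : M.Q} {w : ℕ → A} (hw : w ∈ M.LangFrom q) :
    ∃ T s, sh w T ∈ M.SafeLang s := by
  obtain ⟨ρ, hrun, hac⟩ := hw
  rw [hacc, genCoBuchi_unit_iff] at hac
  obtain ⟨n₀, hn₀⟩ := hac
  refine ⟨n₀, (ρ n₀).src, fun n => ρ (n₀ + n), ⟨rfl, fun n =>
    ⟨(hrun.2 (n₀ + n)).1, (hrun.2 (n₀ + n)).2.1, by
      have := (hrun.2 (n₀ + n)).2.2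
      rwa [Nat.add_succ] at this⟩⟩, fun n => hn₀ (n₀ + n) (by omega)⟩

/-- In a reachable, semantically deterministic automaton for a
prefix-independent language, every state recognises the whole language. -/
lemma langFrom_eq {L : Set (ℕ → A)} (hpi : PrefixIndependent L)
    {M : Automaton A (Set Unit)} (hacc : M.acc = genCoBuchi Unit)
    (hreach : ∀ q, M.Reach M.init q) (hsd : M.SemanticallyDeterministic)
    (hlang : M.Lang = L) : ∀ q, M.LangFrom q = L := by
  intro q
  have h := hreach q
  induction h with
  | refl => exact hlang
  | tail _ hstep ih =>
    obtain ⟨t, ht, hsrc, hdst⟩ := hstep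
    have hm : M.LangFrom t.src = L := hsrc ▸ ih
    rw [← hdst]
    ext w
    constructor
    · intro hw
      have h1 : consW t.lab w ∈ M.LangFrom t.src := mem_lang_cons hacc ht hw
      rw [hm] at h1
      have h2 : w ∈ residualLang [t.lab] L := by
        show wordAppend [t.lab] w ∈ L
        rw [wordAppend_singleton]
        exact h1
      rwa [hpi [t.lab]] at h2
    · intro hw
      have h1 : wordAppend [t.lab] w ∈ L := by
        rw [← hpi [t.lab]] at hw
        exact hw
      rw [wordAppend_singleton, ← hm] at h1
      obtain ⟨t', ht', hsrc', hlab', htl⟩ := tail_mem hacc h1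
      have hshw : sh (consW t.lab w) 1 = w := by
        funext n
        simp [sh, consW, Nat.add_comm 1 n]
      rw [hshw] at htl
      have heq := hsd t' ht' t ht (by rw [hsrc']) (by rw [hlab']; rfl)
      rwa [heq] at htl

/-! ### The context of the main contradiction -/

/-- All data of the situation `|B| < ncard (safe component of qstar)`. -/
structure Ctx (A : Type) where
  L : Set (ℕ → A)
  hpi : PrefixIndependent L
  M : Automaton A (Set Unit)
  hacc : M.acc = genCoBuchi Unit
  hreach : ∀ q, M.Reach M.init q
  hsd : M.SemanticallyDeterministic
  hnf : M.NormalForm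
  hdet : M.SafeDeterministic
  hsm : M.SafeMinimal
  hsc : M.SafeCentralised
  hlang : M.Lang = L
  γ : Type
  B : Automaton A (Set γ)
  haccB : B.acc = genCoBuchi γ
  hlangB : B.Lang = L
  rB : List A → AutTrans B.Q A (Set γ)
  hrB : B.IsResolver rB
  qstar : M.Q
  hcard : @Fintype.card B.Q B.fin < (M.safeComponentOf qstar).ncard

variable {A : Type} (C : Ctx A)

namespace Ctx

/-- The distinguished big safe component. -/
def S : Set C.M.Q := C.M.safeComponentOf C.qstar

lemma mem_S {p : C.M.Q} : p ∈ C.S ↔ C.M.SafeConn p C.qstar := Iff.rfl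

lemma qstar_mem_S : C.qstar ∈ C.S := safeConn_refl _ _

lemma S_conn {p q : C.M.Q} (hp : p ∈ C.S) (hq : q ∈ C.S) : C.M.SafeConn p q :=
  safeConn_trans hp (safeConn_symm hq)

lemma S_closed {p q : C.M.Q} (hp : p ∈ C.S) {u : List A} (h : SRun C.M p u q) :
    q ∈ C.S :=
  safeConn_trans (safeConn_symm (safeConn_of_srun C.hnf h)) hp

lemma hLF : ∀ q, C.M.LangFrom q = C.L :=
  langFrom_eq C.hpi C.hacc C.hreach C.hsd C.hlang

lemma S_finite : C.S.Finite := by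
  letI := C.M.fin
  exact Set.toFinite _

lemma exists_max : ∃ a ∈ C.S, ∀ r ∈ C.S,
    C.M.SafeLang a ⊆ C.M.SafeLang r → C.M.SafeLang a = C.M.SafeLang r :=
  by
    obtain ⟨a, ha, hmax⟩ := Set.Finite.exists_maximalFor (fun p => C.M.SafeLang p) C.S C.S_finite
      ⟨C.qstar, C.qstar_mem_S⟩
    exact ⟨a, ha, fun r hr h => le_antisymm h (hmax hr h)⟩

/-- A maximal state of the component `S`. -/
noncomputable def aa : C.M.Q := C.exists_max.choose

lemma aa_mem : C.aa ∈ C.S := C.exists_max.choose_spec.1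

lemma aa_max : ∀ r ∈ C.S, C.M.SafeLang C.aa ⊆ C.M.SafeLang r →
    C.M.SafeLang C.aa = C.M.SafeLang r := C.exists_max.choose_spec.2

/-- Separating word for the maximal state against anybody else. -/
lemma kill_from_aa {r : C.M.Q} (hne : r ≠ C.aa) :
    ∃ u, PreS C.M C.aa u ∧ ¬ PreS C.M r u := by
  by_contra h
  push_neg at h
  have hsub : ∀ u, PreS C.M C.aa u → PreS C.M r u := fun u hu => by
    by_contra h'
    exact h' (h u hu)
  have hsafe : C.M.SafeLang C.aa ⊆ C.M.SafeLang r := preS_mono_safeLang C.hdet hsub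
  have hconn : C.M.SafeConn C.aa r :=
    C.hsc C.aa r (by rw [C.hLF, C.hLF]) (Or.inl hsafe)
  have hrS : r ∈ C.S := safeConn_trans (safeConn_symm hconn) C.aa_mem
  have heq : C.M.SafeLang C.aa = C.M.SafeLang r := C.aa_max r hrS hsafe
  exact hne (C.hsm r C.aa (by rw [C.hLF, C.hLF]) heq.symm)

/-- Between two distinct states of `S` there is a separating word in one
direction or the other. -/
lemma kill_pair {p q : C.M.Q} (hp : p ∈ C.S) (hq : q ∈ C.S) (hne : p ≠ q) :
    (∃ u, PreS C.M p u ∧ ¬ PreS C.M q u) ∨ (∃ u, PreS C.M q u ∧ ¬ PreS C.M p u) := by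
  by_contra h
  push_neg at h
  have h1 : ∀ u, PreS C.M p u → PreS C.M q u := fun u hu => by
    by_contra h'; exact h' (h.1 u hu)
  have h2 : ∀ u, PreS C.M q u → PreS C.M p u := fun u hu => by
    by_contra h'; exact h' (h.2 u hu)
  have heq : C.M.SafeLang p = C.M.SafeLang q :=
    le_antisymm (preS_mono_safeLang C.hdet h1) (preS_mono_safeLang C.hdet h2)
  exact hne (C.hsm p q (by rw [C.hLF, C.hLF]) heq)

open Classical in
/-- Safe connecting words inside `S`. -/
noncomputable def pw (p q : C.M.Q) : List A :=
  if h : C.M.SafeConn p q then (word_of_safeConn h).choose else []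

lemma pw_spec {p q : C.M.Q} (h : C.M.SafeConn p q) : SRun C.M p (C.pw p q) q := by
  classical
  rw [pw]
  rw [dif_pos h]
  exact (word_of_safeConn h).choose_spec

open Classical in
/-- Killer words. -/
noncomputable def kap (p q : C.M.Q) : List A :=
  if h : ∃ u, PreS C.M p u ∧ ¬ PreS C.M q u then h.choose else []

lemma kap_preS (p q : C.M.Q) : PreS C.M p (C.kap p q) := by
  classical
  rw [kap]
  split
  · next h => exact h.choose_spec.1
  · exact preS_nil _ _

lemma kap_not {p q : C.M.Q} (h : ∃ u, PreS C.M p u ∧ ¬ PreS C.M q u) :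
    ¬ PreS C.M q (C.kap p q) := by
  classical
  rw [kap]
  rw [dif_pos h]
  exact h.choose_spec.2

/-- Endpoint of the killer word from `p`. -/
noncomputable def kEnd (p q : C.M.Q) : C.M.Q := (C.kap_preS p q).choose

lemma kEnd_spec (p q : C.M.Q) : SRun C.M p (C.kap p q) (C.kEnd p q) :=
  (C.kap_preS p q).choose_spec

lemma kEnd_mem {p : C.M.Q} (hp : p ∈ C.S) (q : C.M.Q) : C.kEnd p q ∈ C.S :=
  C.S_closed hp (C.kEnd_spec p q)

/-! ### The kill-all gadget -/

lemma gadget_aux : ∀ (m : ℕ) (P : Finset C.M.Q), P.card ≤ m → C.aa ∈ P →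
    ∃ G : List A, SRun C.M C.aa G C.aa ∧ ∀ r ∈ P, ∀ z, SRun C.M r G z → z = C.aa := by
  intro m
  induction m with
  | zero => intro P hP haP; simp [Finset.card_eq_zero.mp (Nat.le_zero.mp hP)] at haP
  | succ m ih =>
    intro P hP haP
    by_cases hall : ∀ r ∈ P, r = C.aa
    · refine ⟨[], rfl, fun r hr z hz => ?_⟩
      rw [srun_nil] at hz
      rw [← hz, hall r hr]
    · push_neg at hall
      obtain ⟨r₀, hr₀P, hr₀⟩ := hall
      classical
      letI := C.M.fin
      have hkill := C.kill_from_aa hr₀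
      set w₁ : List A := C.kap C.aa r₀ ++ C.pw (C.kEnd C.aa r₀) C.aa with hw₁
      have hw₁run : SRun C.M C.aa w₁ C.aa :=
        srun_append (C.kEnd_spec C.aa r₀)
          (C.pw_spec (C.S_conn (C.kEnd_mem C.aa_mem r₀) C.aa_mem))
      have hw₁kill : ¬ PreS C.M r₀ w₁ := by
        intro hpre
        exact C.kap_not hkill (preS_of_append hpre)
      set f : C.M.Q → C.M.Q := fun r =>
        if h : ∃ z, SRun C.M r w₁ z then h.choose else r with hf
      set P' : Finset C.M.Q :=
        (P.erase r₀).filter (fun r => ∃ z, SRun C.M r w₁ z) |>.image f with hP'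
      have haP' : C.aa ∈ P' := by
        rw [hP']
        refine Finset.mem_image.mpr ⟨C.aa, Finset.mem_filter.mpr
          ⟨Finset.mem_erase.mpr ⟨fun h => hr₀ h.symm, haP⟩, ⟨C.aa, hw₁run⟩⟩, ?_⟩
        rw [hf]
        simp only
        rw [dif_pos ⟨C.aa, hw₁run⟩]
        exact srun_unique C.hdet (Exists.choose_spec (⟨C.aa, hw₁run⟩ :
          ∃ z, SRun C.M C.aa w₁ z)) hw₁run
      have hcard' : P'.card ≤ m := by
        have h1 : P'.card ≤ (P.erase r₀).card :=
          le_trans (Finset.card_image_le) (Finset.card_filter_le _ _)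
        have h2 : (P.erase r₀).card < P.card := Finset.card_erase_lt_of_mem hr₀P
        omega
      obtain ⟨G₀, hG₀run, hG₀⟩ := ih P' hcard' haP'
      refine ⟨w₁ ++ G₀, srun_append hw₁run hG₀run, fun r hr z hz => ?_⟩
      obtain ⟨mid, hmid1, hmid2⟩ := srun_append_split hz
      have hrne : r ≠ r₀ := by
        intro h
        exact hw₁kill ⟨mid, h ▸ hmid1⟩
      have hmidP' : mid ∈ P' := by
        rw [hP']
        refine Finset.mem_image.mpr ⟨r, Finset.mem_filter.mpr
          ⟨Finset.mem_erase.mpr ⟨hrne, hr⟩, ⟨mid, hmid1⟩⟩, ?_⟩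
        rw [hf]
        simp only
        rw [dif_pos ⟨mid, hmid1⟩]
        exact srun_unique C.hdet (Exists.choose_spec (⟨mid, hmid1⟩ :
          ∃ z, SRun C.M r w₁ z)) hmid1
      exact hG₀ mid hmidP' z hmid2

lemma gadget_ex : ∃ G : List A, SRun C.M C.aa G C.aa ∧
    ∀ r z, SRun C.M r G z → z = C.aa := by
  classical
  letI := C.M.fin
  obtain ⟨G, h1, h2⟩ := C.gadget_aux (Finset.univ.card) Finset.univ le_rfl
    (Finset.mem_univ _)
  exact ⟨G, h1, fun r z h => h2 r (Finset.mem_univ r) z h⟩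

end Ctx

namespace Ctx

/-! ### Basic cardinality facts -/

lemma BQ_nonempty : Nonempty C.B.Q := ⟨(C.rB []).src⟩

lemma two_le_ncard : 2 ≤ C.S.ncard := by
  have h1 : 1 ≤ @Fintype.card C.B.Q C.B.fin := by
    letI := C.B.fin
    exact Fintype.card_pos_iff.mpr C.BQ_nonempty
  have h2 := C.hcard
  have h3 : (C.M.safeComponentOf C.qstar).ncard = C.S.ncard := rfl
  omega

lemma S2 : ∃ r ∈ C.S, r ≠ C.aa :=
  Set.exists_ne_of_one_lt_ncard (by have := C.two_le_ncard; omega) C.aa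

/-- Default letter. -/
noncomputable def dfltA : A := (C.rB []).lab

open Classical in
/-- Some state of `S` different from `aa`. -/
noncomputable def r0 : C.M.Q := if h : ∃ r ∈ C.S, r ≠ C.aa then h.choose else C.aa

lemma r0_mem : C.r0 ∈ C.S := by
  classical
  rw [r0]
  split
  · next h => exact h.choose_spec.1
  · exact C.aa_mem

/-- The kill-all gadget, padded to be nonempty. -/
noncomputable def GG : List A :=
  C.kap C.aa C.r0 ++ C.pw (C.kEnd C.aa C.r0) C.aa ++ C.gadget_ex.choose

lemma GG_run : SRun C.M C.aa C.GG C.aa :=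
  srun_append (srun_append (C.kEnd_spec C.aa C.r0)
    (C.pw_spec (C.S_conn (C.kEnd_mem C.aa_mem C.r0) C.aa_mem)))
    C.gadget_ex.choose_spec.1

lemma GG_kill : ∀ r z, SRun C.M r C.GG z → z = C.aa := by
  intro r z h
  obtain ⟨m1, -, h2⟩ := srun_append_split h
  exact C.gadget_ex.choose_spec.2 m1 z h2

lemma GG_ne : C.GG ≠ [] := by
  have h2 := C.S2
  have hr0 : C.r0 ≠ C.aa := by
    classical
    rw [r0]
    rw [dif_pos h2]
    exact h2.choose_spec.2
  have hkill := C.kill_from_aa hr0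
  intro h
  have h1 : C.kap C.aa C.r0 = [] := by
    rcases List.append_eq_nil_iff.mp (List.append_eq_nil_iff.mp h).1 with ⟨h1, -⟩
    exact h1
  exact C.kap_not hkill (h1 ▸ preS_nil _ _)

/-! ### The enumeration of `S` -/

/-- List of the states of `S`. -/
noncomputable def lsD : List C.M.Q := C.S_finite.toFinset.toList

lemma lsD_nodup : C.lsD.Nodup := Finset.nodup_toList _

lemma mem_lsD {p : C.M.Q} : p ∈ C.lsD ↔ p ∈ C.S := by
  rw [lsD, Finset.mem_toList, Set.Finite.mem_toFinset]

lemma lsD_length : C.lsD.length = C.S.ncard := by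
  rw [lsD, Finset.length_toList, Set.ncard_eq_toFinset_card _ C.S_finite]

lemma lsD_pos : 0 < C.lsD.length := by
  rw [lsD_length]
  have := C.two_le_ncard
  omega

/-- The state visited by the `i`-th block. -/
noncomputable def piF (i : ℕ) : C.M.Q := C.lsD.getD (i % C.lsD.length) C.qstar

lemma piF_mem_S (i : ℕ) : C.piF i ∈ C.S := by
  rw [piF, List.getD_eq_getElem _ _ (Nat.mod_lt _ C.lsD_pos)]
  exact C.mem_lsD.mp (List.getElem_mem _)

open Classical in
/-- Candidate-target list for the state `p`. -/
noncomputable def tl (p : C.M.Q) : List C.M.Q := C.lsD.filter (fun r => decide (r ≠ p))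

lemma mem_tl {p q : C.M.Q} : q ∈ C.tl p ↔ q ∈ C.S ∧ q ≠ p := by
  classical
  rw [tl, List.mem_filter]
  simp [mem_lsD]

/-! ### The adaptive construction -/

/-- Observed state of the resolver of `B` after a finite word. -/
noncomputable def obsOf (u : List A) : C.B.Q := (C.rB u).dst

open Classical in
/-- State of the construction: the prefix built so far, the current state of
the reference safe run, and the counters used to cycle over killer targets. -/
noncomputable def st : ℕ → List A × C.M.Q × (C.M.Q → C.B.Q → ℕ)
  | 0 => ([], C.aa, fun _ _ => 0)
  | (i + 1) =>
      match st i with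
      | (u, rr, cn) =>
        let p := C.piF i
        let part1 := C.pw rr C.aa ++ C.GG ++ C.pw C.aa p
        let b := C.obsOf (u ++ part1)
        let j := cn p b
        let tg := (C.tl p).getD (j % (C.tl p).length) C.qstar
        (u ++ part1 ++ C.kap p tg, C.kEnd p tg,
          fun p' b' => if p' = p ∧ b' = b then j + 1 else cn p' b')

/-- The prefix after `i` blocks. -/
noncomputable def pref (i : ℕ) : List A := (C.st i).1

/-- The reference state after `i` blocks. -/
noncomputable def refr (i : ℕ) : C.M.Q := (C.st i).2.1

/-- The counters after `i` blocks. -/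
noncomputable def cnt (i : ℕ) : C.M.Q → C.B.Q → ℕ := (C.st i).2.2

/-- First part of the `i`-th block: return to `aa`, kill-all gadget, move to
the visited state. -/
noncomputable def part1F (i : ℕ) : List A :=
  C.pw (C.refr i) C.aa ++ C.GG ++ C.pw C.aa (C.piF i)

/-- The state of the resolver at the `i`-th mark. -/
noncomputable def obsF (i : ℕ) : C.B.Q := C.obsOf (C.pref i ++ C.part1F i)

/-- Counter value at the `i`-th mark. -/
noncomputable def jF (i : ℕ) : ℕ := C.cnt i (C.piF i) (C.obsF i)

/-- Target of the killer played at the `i`-th mark. -/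
noncomputable def tgtF (i : ℕ) : C.M.Q :=
  (C.tl (C.piF i)).getD (C.jF i % (C.tl (C.piF i)).length) C.qstar

/-- The killer word played at the `i`-th mark. -/
noncomputable def kwF (i : ℕ) : List A := C.kap (C.piF i) (C.tgtF i)

lemma pref_zero : C.pref 0 = [] := by simp [pref, st]

lemma refr_zero : C.refr 0 = C.aa := by simp [refr, st]

lemma cnt_zero : C.cnt 0 = fun _ _ => 0 := by simp [cnt, st]

lemma pref_succ (i : ℕ) : C.pref (i + 1) = C.pref i ++ C.part1F i ++ C.kwF i := by
  simp only [pref, part1F, kwF, tgtF, jF, obsF, refr, cnt, piF, st, obsOf]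

lemma refr_succ (i : ℕ) : C.refr (i + 1) = C.kEnd (C.piF i) (C.tgtF i) := by
  simp only [refr, pref, part1F, kwF, tgtF, jF, obsF, cnt, piF, st, obsOf]

open Classical in
lemma cnt_succ (i : ℕ) : C.cnt (i + 1) = fun p' b' =>
    if p' = C.piF i ∧ b' = C.obsF i then C.jF i + 1 else C.cnt i p' b' := by
  simp only [cnt, pref, part1F, tgtF, jF, obsF, refr, piF, st, obsOf]
  funext p' b'
  exact if_congr Iff.rfl rfl rfl

end Ctx

namespace Ctx

/-! ### The word `x` and its properties -/

/-- The infinite word built by the construction. -/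
noncomputable def xw : ℕ → A := fun m => (C.pref (m + 1)).getD m C.dfltA

/-- The position of the `i`-th mark. -/
noncomputable def markP (i : ℕ) : ℕ := (C.pref i).length + (C.part1F i).length

lemma part1F_len_pos (i : ℕ) : 0 < (C.part1F i).length := by
  rw [part1F]
  have := C.GG_ne
  have : C.GG.length ≠ 0 := fun h => this (List.length_eq_zero_iff.mp h)
  simp only [List.length_append]
  omega

lemma pref_len_lt (i : ℕ) : (C.pref i).length < (C.pref (i + 1)).length := by
  rw [C.pref_succ i]
  simp only [List.length_append]
  have := C.part1F_len_pos i
  omega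

lemma pref_len_mono {i j : ℕ} (h : i ≤ j) : (C.pref i).length ≤ (C.pref j).length := by
  induction j with
  | zero => simp_all
  | succ m ih =>
    rcases Nat.lt_or_ge i (m + 1) with h' | h'
    · exact le_trans (ih (by omega)) (le_of_lt (C.pref_len_lt m))
    · have : i = m + 1 := by omega
      subst this; rfl

lemma pref_len_ge (i : ℕ) : i ≤ (C.pref i).length := by
  induction i with
  | zero => simp
  | succ m ih => have := C.pref_len_lt m; omega

lemma pref_prefix {i j : ℕ} (h : i ≤ j) : C.pref i <+: C.pref j := by
  induction j with
  | zero => simp_all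
  | succ m ih =>
    rcases Nat.lt_or_ge i (m + 1) with h' | h'
    · refine (ih (by omega)).trans ?_
      rw [C.pref_succ m, List.append_assoc]
      exact ⟨_, rfl⟩
    · have : i = m + 1 := by omega
      subst this; exact List.prefix_refl _

lemma getD_of_prefix {u v : List A} (h : u <+: v) {m : ℕ} (hm : m < u.length)
    (d : A) : v.getD m d = u.getD m d := by
  obtain ⟨t, rfl⟩ := h
  rw [List.getD_eq_getElem _ _ (by simp; omega), List.getD_eq_getElem _ _ hm]
  exact List.getElem_append_left hm

lemma xw_stab {m i : ℕ} (hm : m < (C.pref i).length) :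
    C.xw m = (C.pref i).getD m C.dfltA := by
  rw [xw]
  rcases Nat.le_total (m + 1) i with h | h
  · have h2 : m < (C.pref (m + 1)).length := by
      have := C.pref_len_ge (m + 1); omega
    exact (getD_of_prefix (C.pref_prefix h) h2 _).symm
  · exact getD_of_prefix (C.pref_prefix h) hm _

lemma pfx_xw {m i : ℕ} (hm : m ≤ (C.pref i).length) :
    pfx C.xw m = (C.pref i).take m := by
  apply List.ext_getElem
  · simp; omega
  · intro t ht1 ht2
    rw [pfx_getElem]
    rw [List.getElem_take]
    have ht : t < (C.pref i).length := by simp at ht1; omega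
    rw [C.xw_stab ht, List.getD_eq_getElem _ _ ht]

/-! ### The reference safe run on `x` -/

lemma refr_mem (i : ℕ) : C.refr i ∈ C.S := by
  induction i with
  | zero => rw [refr_zero]; exact C.aa_mem
  | succ m ih => rw [refr_succ]; exact C.kEnd_mem (C.piF_mem_S m) _

lemma srun_part1 (i : ℕ) : SRun C.M (C.refr i) (C.part1F i) (C.piF i) := by
  rw [part1F]
  exact srun_append (srun_append
    (C.pw_spec (C.S_conn (C.refr_mem i) C.aa_mem)) C.GG_run)
    (C.pw_spec (C.S_conn C.aa_mem (C.piF_mem_S i)))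

lemma srun_pref (i : ℕ) : SRun C.M C.aa (C.pref i) (C.refr i) := by
  induction i with
  | zero => rw [pref_zero, refr_zero]; rfl
  | succ m ih =>
    rw [C.pref_succ m, C.refr_succ m]
    exact srun_append (srun_append ih (C.srun_part1 m)) (C.kEnd_spec _ _)

lemma xw_safe : C.xw ∈ C.M.SafeLang C.aa := by
  rw [mem_safeLang_iff C.hdet]
  intro m
  rw [C.pfx_xw (le_trans (C.pref_len_ge m) le_rfl)]
  exact preS_take ⟨_, C.srun_pref m⟩ m

lemma xw_mem_L : C.xw ∈ C.L := by
  rw [← C.hLF C.aa]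
  exact safeLang_subset_langFrom C.hacc C.aa C.xw_safe

/-! ### The resolver run on `x` -/

/-- The resolver run of `B` on `x`. -/
noncomputable def rx : ℕ → AutTrans C.B.Q A (Set C.γ) := C.B.resRun C.rB C.xw

lemma rx_run : C.B.IsRunFrom C.B.init C.xw C.rx := (C.hrB C.xw).1

lemma rx_acc : (fun n => (C.rx n).out) ∈ genCoBuchi C.γ := by
  have h := (C.hrB C.xw).2
    (by rw [show C.B.Lang = C.L from C.hlangB]; exact C.xw_mem_L)
  rwa [C.haccB] at h

/-- State of the resolver run at time `m`. -/
noncomputable def Bst (m : ℕ) : C.B.Q := (C.rx m).src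

lemma rx_eq (m : ℕ) : C.rx m = C.rB (pfx C.xw (m + 1)) := rfl

lemma Bst_of_pos {m : ℕ} (hm : 0 < m) : C.Bst m = (C.rB (pfx C.xw m)).dst := by
  obtain ⟨k, rfl⟩ : ∃ k, m = k + 1 := ⟨m - 1, by omega⟩
  rw [Bst, ← (C.rx_run.2 k).2.2, rx_eq]

lemma markP_lt_pref_len (i : ℕ) : C.markP i ≤ (C.pref (i + 1)).length := by
  rw [C.pref_succ i, markP]
  simp only [List.length_append]
  omega

lemma markP_pos (i : ℕ) : 0 < C.markP i := by
  have := C.part1F_len_pos i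
  rw [markP]; omega

lemma markP_ge (i : ℕ) : i ≤ C.markP i := by
  have := C.pref_len_ge i
  rw [markP]; omega

lemma markP_strict {i j : ℕ} (h : i < j) : C.markP i < C.markP j := by
  have h1 : C.markP i ≤ (C.pref (i + 1)).length := C.markP_lt_pref_len i
  have h2 : (C.pref (i + 1)).length ≤ (C.pref j).length := C.pref_len_mono h
  have h3 : (C.pref j).length < C.markP j := by
    have := C.part1F_len_pos j
    rw [markP]; omega
  omega

lemma take_mark (i : ℕ) : pfx C.xw (C.markP i) = C.pref i ++ C.part1F i := by
  have h1 : C.markP i ≤ (C.pref (i + 1)).length := C.markP_lt_pref_len i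
  rw [C.pfx_xw h1, C.pref_succ i, markP, ← List.length_append,
    List.take_left]

lemma obsF_eq_Bst (i : ℕ) : C.obsF i = C.Bst (C.markP i) := by
  rw [C.Bst_of_pos (C.markP_pos i), C.take_mark i]
  rfl

end Ctx

namespace Ctx

/-! ### Counters -/

open Classical in
lemma cnt_count (i : ℕ) (p : C.M.Q) (b : C.B.Q) :
    C.cnt i p b = ((Finset.range i).filter
      (fun j => C.piF j = p ∧ C.obsF j = b)).card := by
  classical
  induction i with
  | zero => rw [cnt_zero]; simp
  | succ m ih =>
    rw [cnt_succ]
    simp only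
    rw [Finset.range_add_one, Finset.filter_insert]
    by_cases h : C.piF m = p ∧ C.obsF m = b
    · rw [if_pos ⟨h.1.symm, h.2.symm⟩, if_pos h,
        Finset.card_insert_of_notMem (by simp)]
      rw [jF, h.1, h.2, ih]
    · have h' : ¬ (p = C.piF m ∧ b = C.obsF m) := by
        intro h''; exact h ⟨h''.1.symm, h''.2.symm⟩
      rw [if_neg h', if_neg h, ih]

lemma cnt_le (i : ℕ) (p : C.M.Q) (b : C.B.Q) : C.cnt i p b ≤ i := by
  classical
  rw [C.cnt_count]
  exact le_trans (Finset.card_filter_le _ _) (by simp)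

open Classical in
lemma cnt_stable {p : C.M.Q} {b : C.B.Q} {l : ℕ}
    (h : ¬ (C.piF l = p ∧ C.obsF l = b)) : C.cnt (l + 1) p b = C.cnt l p b := by
  rw [cnt_succ]
  simp only
  rw [if_neg (fun h' => h ⟨h'.1.symm, h'.2.symm⟩)]

open Classical in
lemma cnt_bump {p : C.M.Q} {b : C.B.Q} {l : ℕ}
    (h1 : C.piF l = p) (h2 : C.obsF l = b) :
    C.cnt (l + 1) p b = C.cnt l p b + 1 := by
  rw [cnt_succ]
  simp only
  rw [if_pos ⟨h1.symm, h2.symm⟩, jF, h1, h2]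

/-! ### Infinitely many marks -/

lemma marks_inf {r : C.M.Q} (hr : r ∈ C.S) : ∀ m, ∃ i, m ≤ i ∧ C.piF i = r := by
  intro m
  have hmem : r ∈ C.lsD := C.mem_lsD.mpr hr
  obtain ⟨⟨idx, hidx⟩, hget⟩ := List.mem_iff_get.mp hmem
  have hpos := C.lsD_pos
  refine ⟨idx + C.lsD.length * m, by nlinarith, ?_⟩
  rw [piF, Nat.add_mul_mod_self_left, Nat.mod_eq_of_lt hidx,
    List.getD_eq_getElem _ _ hidx]
  rw [← hget]
  rfl

lemma exists_obs {r : C.M.Q} (hr : r ∈ C.S) :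
    ∃ b : C.B.Q, ∀ m, ∃ i, m ≤ i ∧ C.piF i = r ∧ C.obsF i = b := by
  by_contra h
  push_neg at h
  choose mb hmb using h
  letI := C.B.fin
  set M0 : ℕ := Finset.univ.sup mb with hM0
  obtain ⟨i, hi, hpi⟩ := C.marks_inf hr M0
  exact (hmb (C.obsF i) i (le_trans (Finset.le_sup (Finset.mem_univ _)) hi) hpi) rfl

/-- The pigeonhole: two distinct states of `S` whose marks share a resolver
state infinitely often. -/
lemma exists_pair : ∃ p q b, p ∈ C.S ∧ q ∈ C.S ∧ p ≠ q ∧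
    (∀ m, ∃ i, m ≤ i ∧ C.piF i = p ∧ C.obsF i = b) ∧
    (∀ m, ∃ i, m ≤ i ∧ C.piF i = q ∧ C.obsF i = b) := by
  classical
  letI := C.B.fin
  have hmem : ∀ t : Fin C.lsD.length, C.lsD.get t ∈ C.S := fun t =>
    C.mem_lsD.mp (List.get_mem _ _)
  have hcard : Fintype.card C.B.Q < Fintype.card (Fin C.lsD.length) := by
    rw [Fintype.card_fin, C.lsD_length]
    exact C.hcard
  set f : Fin C.lsD.length → C.B.Q :=
    fun t => (C.exists_obs (hmem t)).choose with hf
  obtain ⟨t1, t2, hne, heq⟩ := Fintype.exists_ne_map_eq_of_card_lt f hcard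
  refine ⟨C.lsD.get t1, C.lsD.get t2, f t1, hmem t1, hmem t2, ?_, ?_, ?_⟩
  · intro h
    exact hne (C.lsD_nodup.get_inj_iff.mp h)
  · exact (C.exists_obs (hmem t1)).choose_spec
  · rw [heq]
    exact (C.exists_obs (hmem t2)).choose_spec

/-! ### The counter reaches every value on an infinite mark class -/

lemma cnt_flat {p : C.M.Q} {b : C.B.Q} (i : ℕ) : ∀ d,
    (∀ l, i ≤ l → l < i + d → ¬ (C.piF l = p ∧ C.obsF l = b)) →
    C.cnt (i + d) p b = C.cnt i p b := by
  intro d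
  induction d with
  | zero => intro _; rfl
  | succ e ih =>
    intro h
    rw [← Nat.add_assoc, C.cnt_stable (h (i + e) (by omega) (by omega)),
      ih (fun l h1 h2 => h l h1 (by omega))]

open Classical in
lemma cnt_reaches {p : C.M.Q} {b : C.B.Q}
    (hinf : ∀ m, ∃ i, m ≤ i ∧ C.piF i = p ∧ C.obsF i = b) :
    ∀ j, ∃ i, C.piF i = p ∧ C.obsF i = b ∧ C.cnt i p b = j := by
  intro j
  induction j with
  | zero =>
    have hex : ∃ i, C.piF i = p ∧ C.obsF i = b := by
      obtain ⟨i, -, h1, h2⟩ := hinf 0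
      exact ⟨i, h1, h2⟩
    set i := Nat.find hex with hi
    refine ⟨i, (Nat.find_spec hex).1, (Nat.find_spec hex).2, ?_⟩
    have h0 : C.cnt 0 p b = 0 := by rw [cnt_zero]
    have := C.cnt_flat 0 i (fun l _ hl => Nat.find_min hex (by omega))
    simpa [h0] using this
  | succ j ih =>
    obtain ⟨i, hp1, hp2, hc⟩ := ih
    have hex : ∃ i', i + 1 ≤ i' ∧ C.piF i' = p ∧ C.obsF i' = b := hinf (i + 1)
    set i' := Nat.find hex with hi'
    obtain ⟨hge, hp1', hp2'⟩ := Nat.find_spec hex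
    refine ⟨i', hp1', hp2', ?_⟩
    have hstep : C.cnt (i + 1) p b = j + 1 := by
      rw [C.cnt_bump hp1 hp2, hc]
    have hflat := C.cnt_flat (p := p) (b := b) (i + 1) (i' - (i + 1))
      (fun l h1 h2 hPl => Nat.find_min hex (m := l) (by omega) ⟨by omega, hPl⟩)
    rw [show i + 1 + (i' - (i + 1)) = i' from by omega] at hflat
    rw [hflat, hstep]

/-- At arbitrarily late marks of `(p, b)` the killer target is `q`. -/
lemma target_hits {p q : C.M.Q} {b : C.B.Q} (hq : q ∈ C.tl p)
    (hinf : ∀ m, ∃ i, m ≤ i ∧ C.piF i = p ∧ C.obsF i = b) :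
    ∀ m, ∃ i, m ≤ i ∧ C.piF i = p ∧ C.obsF i = b ∧ C.tgtF i = q := by
  intro m
  obtain ⟨⟨idx, hidx⟩, hget⟩ := List.mem_iff_get.mp hq
  have hlen : 0 < (C.tl p).length := by omega
  obtain ⟨i, h1, h2, h3⟩ := C.cnt_reaches hinf (idx + (C.tl p).length * m)
  refine ⟨i, ?_, h1, h2, ?_⟩
  · have h4 := C.cnt_le i p b
    nlinarith
  · rw [tgtF, h1, jF, h1, h2, h3, Nat.add_mul_mod_self_left,
      Nat.mod_eq_of_lt hidx, List.getD_eq_getElem _ _ hidx]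
    rw [← hget]
    rfl

end Ctx

namespace Ctx

/-! ### Letters of `x` along the block decomposition -/

lemma xw_at {i : ℕ} {rest1 u rest2 : List A}
    (h : C.pref (i + 1) = rest1 ++ u ++ rest2) {t : ℕ} (ht : t < u.length) :
    C.xw (rest1.length + t) = u[t] := by
  have hm : rest1.length + t < (C.pref (i + 1)).length := by
    rw [h]
    simp only [List.length_append]
    omega
  rw [C.xw_stab hm, List.getD_eq_getElem _ _ hm]
  have hm' : rest1.length + t < (rest1 ++ u ++ rest2).length := by
    rw [← h]; exact hm
  have hm2 : rest1.length + t < (rest1 ++ u).length := by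
    simp only [List.length_append]; omega
  calc (C.pref (i + 1))[rest1.length + t]'hm
      = (rest1 ++ u ++ rest2)[rest1.length + t]'hm' := by
        congr 1
    _ = (rest1 ++ u)[rest1.length + t]'hm2 := List.getElem_append_left hm2
    _ = u[rest1.length + t - rest1.length]'(by simp; omega) :=
        List.getElem_append_right (by omega)
    _ = u[t] := by congr 1; omega

/-! ### The pumping argument -/

lemma pump {p q : C.M.Q} {b : C.B.Q} (hpS : p ∈ C.S) (hqS : q ∈ C.S)
    (hne : p ≠ q) (hκ : ∃ u, PreS C.M p u ∧ ¬ PreS C.M q u)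
    (hinfp : ∀ m, ∃ i, m ≤ i ∧ C.piF i = p ∧ C.obsF i = b)
    (hinfq : ∀ m, ∃ i, m ≤ i ∧ C.piF i = q ∧ C.obsF i = b) : False := by
  obtain ⟨cbar, n₀, hn₀⟩ := C.rx_acc
  have hqtl : q ∈ C.tl p := C.mem_tl.mpr ⟨hqS, fun h => hne h.symm⟩
  obtain ⟨i₁, hi₁n, hpi₁, hobs₁, htgt₁⟩ := C.target_hits hqtl hinfp n₀
  obtain ⟨i₂, hi₂, hpi₂, hobs₂⟩ := hinfq (i₁ + 1)
  obtain ⟨μ₁, hμ₁def⟩ : ∃ x, C.markP i₁ = x := ⟨_, rfl⟩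
  obtain ⟨μ₂, hμ₂def⟩ : ∃ x, C.markP i₂ = x := ⟨_, rfl⟩
  obtain ⟨ℓ, hℓdef⟩ : ∃ x, μ₂ - μ₁ = x := ⟨_, rfl⟩
  have hμlt : μ₁ < μ₂ := by
    rw [← hμ₁def, ← hμ₂def]; exact C.markP_strict (by omega)
  have hℓ : 0 < ℓ := by omega
  have hℓsum : μ₁ + ℓ = μ₂ := by omega
  have hn₀μ : n₀ ≤ μ₁ := by
    rw [← hμ₁def]; exact le_trans hi₁n (C.markP_ge i₁)
  have hμ₁pos : 0 < μ₁ := by rw [← hμ₁def]; exact C.markP_pos i₁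
  -- the pumped word
  set y : ℕ → A := fun m => if m < μ₁ then C.xw m else C.xw (μ₁ + (m - μ₁) % ℓ)
    with hy
  have hylet : ∀ c e, e < ℓ → y (μ₁ + c * ℓ + e) = C.xw (μ₁ + e) := by
    intro c e he
    have h1 : ¬ (μ₁ + c * ℓ + e < μ₁) := by omega
    rw [hy]
    simp only
    rw [if_neg h1, show μ₁ + c * ℓ + e - μ₁ = e + c * ℓ from by omega,
      Nat.add_mul_mod_self_right, Nat.mod_eq_of_lt he]
  -- equal resolver states at the two marks
  have hsrcb : (C.rx μ₂).src = (C.rx μ₁).src := by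
    have e1 : C.Bst μ₁ = b := by rw [← hμ₁def, ← C.obsF_eq_Bst i₁]; exact hobs₁
    have e2 : C.Bst μ₂ = b := by rw [← hμ₂def, ← C.obsF_eq_Bst i₂]; exact hobs₂
    rw [Bst] at e1 e2
    rw [e1, e2]
  have hchain : ∀ m, (C.rx m).dst = (C.rx (m + 1)).src := fun m =>
    (C.rx_run.2 m).2.2
  have hmod : ∀ u : ℕ, (u + 1) % ℓ = u % ℓ + 1 ∨
      (u % ℓ + 1 = ℓ ∧ (u + 1) % ℓ = 0) := by
    intro u
    have h1 : (u + 1) % ℓ = (u % ℓ + 1) % ℓ := (Nat.mod_add_mod u ℓ 1).symm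
    have h2 : u % ℓ < ℓ := Nat.mod_lt u hℓ
    rcases Nat.lt_or_ge (u % ℓ + 1) ℓ with h | h
    · left; rw [h1, Nat.mod_eq_of_lt h]
    · right
      have h3 : u % ℓ + 1 = ℓ := by omega
      exact ⟨h3, by rw [h1, h3, Nat.mod_self]⟩
  -- the pumped run of B
  set ρy : ℕ → AutTrans C.B.Q A (Set C.γ) :=
    fun m => if m < μ₁ then C.rx m else C.rx (μ₁ + (m - μ₁) % ℓ) with hρy
  have hin : ∀ u : ℕ, μ₁ + u % ℓ < μ₂ := fun u => by
    have := Nat.mod_lt u hℓ; omega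
  have hymem : y ∈ C.B.LangFrom C.B.init := by
    refine ⟨ρy, ⟨?_, ?_⟩, ?_⟩
    · rw [hρy]; simp only
      rw [if_pos hμ₁pos]
      exact C.rx_run.1
    · intro m
      rcases Nat.lt_or_ge m μ₁ with hm | hm
      · rw [hρy, hy]
        simp only
        rw [if_pos hm, if_pos hm]
        refine ⟨(C.rx_run.2 m).1, (C.rx_run.2 m).2.1, ?_⟩
        rcases Nat.lt_or_ge (m + 1) μ₁ with hm1 | hm1
        · rw [if_pos hm1]
          exact hchain m
        · have hm1' : m + 1 = μ₁ := by omega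
          rw [if_neg (by omega), hm1']
          simp only [Nat.sub_self, Nat.zero_mod, Nat.add_zero]
          exact hm1' ▸ hchain m
      · rw [hρy, hy]
        simp only
        rw [if_neg (by omega), if_neg (by omega)]
        refine ⟨(C.rx_run.2 _).1, (C.rx_run.2 _).2.1, ?_⟩
        rw [if_neg (by omega)]
        have hms : m + 1 - μ₁ = (m - μ₁) + 1 := by omega
        rcases hmod (m - μ₁) with h | ⟨h1, h2⟩
        · rw [hms, h]
          have : μ₁ + (m - μ₁) % ℓ + 1 = μ₁ + ((m - μ₁) % ℓ + 1) := by omega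
          rw [← this]
          exact hchain _
        · rw [hms, h2, Nat.add_zero]
          have h3 : μ₁ + (m - μ₁) % ℓ + 1 = μ₂ := by omega
          rw [← hsrcb, ← h3]
          exact hchain _
    · rw [C.haccB]
      refine ⟨cbar, μ₁, fun m hm => ?_⟩
      rw [hρy]
      simp only
      rw [if_neg (by omega)]
      exact hn₀ (μ₁ + (m - μ₁) % ℓ) (by omega)
  have hyL : y ∈ C.L := by
    rw [← show C.B.Lang = C.L from C.hlangB]
    exact hymem
  -- geometry of the second mark's block
  obtain ⟨gg, hggdef⟩ :
      ∃ x, (C.pref i₂).length + (C.pw (C.refr i₂) C.aa).length = x := ⟨_, rfl⟩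
  have hμ₁i₂ : μ₁ ≤ (C.pref i₂).length := by
    rw [← hμ₁def]
    exact le_trans (C.markP_lt_pref_len i₁) (C.pref_len_mono (by omega))
  have hμ₁gg : μ₁ ≤ gg := by omega
  have hgeom : gg + C.GG.length + (C.pw C.aa (C.piF i₂)).length = μ₂ := by
    rw [← hggdef, ← hμ₂def, markP, part1F]
    simp only [List.length_append]
    omega
  have hkwlen : μ₁ + (C.kwF i₁).length ≤ μ₂ := by
    have h1 : (C.pref (i₁ + 1)).length = μ₁ + (C.kwF i₁).length := by
      rw [C.pref_succ i₁, ← hμ₁def, markP]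
      simp only [List.length_append]
    have h2 : (C.pref (i₁ + 1)).length ≤ (C.pref i₂).length :=
      C.pref_len_mono (by omega)
    omega
  -- letters of the three windows
  have hletG : ∀ t (ht : t < C.GG.length), C.xw (gg + t) = C.GG[t]'ht := by
    intro t ht
    have hdec : C.pref (i₂ + 1) = (C.pref i₂ ++ C.pw (C.refr i₂) C.aa) ++ C.GG ++
        (C.pw C.aa (C.piF i₂) ++ C.kwF i₂) := by
      rw [C.pref_succ i₂, part1F]
      simp only [List.append_assoc]
    have := C.xw_at hdec (t := t) ht
    rwa [List.length_append, hggdef] at this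
  have hletτ : ∀ t (h : t < (C.pw C.aa (C.piF i₂)).length),
      C.xw (gg + C.GG.length + t) = (C.pw C.aa (C.piF i₂))[t]'h := by
    intro t ht
    have hdec : C.pref (i₂ + 1) = (C.pref i₂ ++ C.pw (C.refr i₂) C.aa ++ C.GG) ++
        C.pw C.aa (C.piF i₂) ++ C.kwF i₂ := by
      rw [C.pref_succ i₂, part1F]
      simp only [List.append_assoc]
    have := C.xw_at hdec (t := t) ht
    rwa [List.length_append, List.length_append, hggdef] at this
  have hletk : ∀ t (h : t < (C.kwF i₁).length), C.xw (μ₁ + t) = (C.kwF i₁)[t]'h := by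
    intro t ht
    have hdec : C.pref (i₁ + 1) = (C.pref i₁ ++ C.part1F i₁) ++ C.kwF i₁ ++ [] := by
      rw [C.pref_succ i₁]
      simp
    have := C.xw_at hdec (t := t) ht
    rwa [List.length_append,
      show (C.pref i₁).length + (C.part1F i₁).length = μ₁ from by
        rw [← hμ₁def, markP]] at this
  -- the pumped word has no safe suffix
  have hdead : ∀ T s, sh y T ∉ C.M.SafeLang s := by
    intro T s hsT
    obtain ⟨ρ, hrun, hsafe⟩ := hsT
    have hwin := srun_window hrun hsafe
    obtain ⟨base, hbasedef⟩ : ∃ x, μ₁ + T * ℓ = x := ⟨_, rfl⟩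
    have hTl : T ≤ T * ℓ := Nat.le_mul_of_pos_right T hℓ
    have hTb : T ≤ base := by omega
    obtain ⟨ys, hysdef⟩ : ∃ x, base + (gg - μ₁) = x := ⟨_, rfl⟩
    -- window 1 : the gadget
    have hwG := hwin C.GG (ys - T) (fun t ht => ?_)
    swap
    · have h1 : T + (ys - T + t) = μ₁ + T * ℓ + (gg - μ₁ + t) := by omega
      have h2 : gg - μ₁ + t < ℓ := by omega
      show y (T + (ys - T + t)) = _
      rw [h1, hylet T _ h2, show μ₁ + (gg - μ₁ + t) = gg + t from by omega]
      exact hletG t ht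
    have hz2 : (ρ (ys - T + C.GG.length)).src = C.aa :=
      C.GG_kill _ _ hwG
    -- window 2 : the path to the second mark state
    have hwτ := hwin (C.pw C.aa (C.piF i₂)) (ys - T + C.GG.length)
      (fun t ht => ?_)
    swap
    · have h1 : T + (ys - T + C.GG.length + t) =
          μ₁ + T * ℓ + (gg - μ₁ + C.GG.length + t) := by omega
      have h2 : gg - μ₁ + C.GG.length + t < ℓ := by omega
      show y (T + (ys - T + C.GG.length + t)) = _
      rw [h1, hylet T _ h2,
        show μ₁ + (gg - μ₁ + C.GG.length + t) = gg + C.GG.length + t from by omega]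
      exact hletτ t ht
    rw [hz2] at hwτ
    have hzq : (ρ (ys - T + C.GG.length + (C.pw C.aa (C.piF i₂)).length)).src = q := by
      have hspec : SRun C.M C.aa (C.pw C.aa (C.piF i₂)) (C.piF i₂) :=
        C.pw_spec (C.S_conn C.aa_mem (C.piF_mem_S i₂))
      have := srun_unique C.hdet hwτ hspec
      rw [this, hpi₂]
    -- window 3 : the killer
    have hidx3 : ys - T + C.GG.length + (C.pw C.aa (C.piF i₂)).length =
        base + ℓ - T := by omega
    have hwk := hwin (C.kwF i₁) (base + ℓ - T) (fun t ht => ?_)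
    swap
    · have h1 : T + (base + ℓ - T + t) = μ₁ + (T + 1) * ℓ + t := by
        have hexp : (T + 1) * ℓ = T * ℓ + ℓ := by ring
        omega
      have h2 : t < ℓ := by omega
      show y (T + (base + ℓ - T + t)) = _
      rw [h1, hylet (T + 1) _ h2]
      exact hletk t ht
    rw [hidx3] at hzq
    rw [hzq] at hwk
    have hkwq : C.kwF i₁ = C.kap p q := by
      rw [kwF, hpi₁, htgt₁]
    rw [hkwq] at hwk
    exact C.kap_not hκ ⟨_, hwk⟩
  obtain ⟨T, s, hTs⟩ := suffix_safe_of_mem C.hacc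
    (q := C.aa) (by rw [C.hLF]; exact hyL)
  exact hdead T s hTs

end Ctx

/-- The main contradiction. -/
lemma Ctx.main {A : Type} (D : Ctx A) : False := by
  obtain ⟨p, q, b, hpS, hqS, hne, hinfp, hinfq⟩ := D.exists_pair
  rcases D.kill_pair hpS hqS hne with hk | hk
  · exact D.pump hpS hqS hne hk hinfp hinfq
  · exact D.pump hqS hpS (Ne.symm hne) hk hinfq hinfp

namespace Ctx

end Ctx

end Stmt6
/-- minimality, prefix-independent case: if `A_min` is a nice,
safe minimal and safe centralised HD coBüchi automaton recognising a
prefix-independent language `L`, and `n_max` is the maximal size of a safe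
component of `A_min`, then every HD generalised coBüchi automaton recognising
`L` has at least `n_max` states. -/
theorem stmt_6 {A : Type} (L : Set (ℕ → A)) (hpi : PrefixIndependent L)
    (M : Automaton A (Set Unit)) (hacc : M.acc = genCoBuchi Unit)
    (hnice : M.Nice) (hsm : M.SafeMinimal) (hsc : M.SafeCentralised)
    (hhd : M.HistoryDeterministic) (hlang : M.Lang = L)
    (nmax : ℕ) (hub : ∀ q : M.Q, (M.safeComponentOf q).ncard ≤ nmax)
    (hex : ∃ q : M.Q, (M.safeComponentOf q).ncard = nmax) :
    ∀ (C : Type) (_ : Fintype C) (B : Automaton A (Set C)),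
      B.acc = genCoBuchi C → B.HistoryDeterministic → B.Lang = L →
      nmax ≤ B.size := by
  intro Cty _instC B haccB hhdB hlangB
  by_contra hlt
  push_neg at hlt
  obtain ⟨qs, hqs⟩ := hex
  obtain ⟨rB, hrB⟩ := hhdB
  exact Stmt6.Ctx.main {
    L := L, hpi := hpi, M := M, hacc := hacc,
    hreach := hnice.1, hsd := hnice.2.1, hnf := hnice.2.2.1,
    hdet := hnice.2.2.2, hsm := hsm, hsc := hsc, hlang := hlang,
    γ := Cty, B := B, haccB := haccB, hlangB := hlangB,
    rB := rB, hrB := hrB, qstar := qs,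
    hcard := by rw [hqs]; simpa [Automaton.size] using hlt }
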